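/- Let p_{k,n}(t) = e^{−(λ+μ)t} (λ/μ)^{(n−k)/2} Σ_{j=−∞}^{∞} [I_{n−k−2jN}(2t√(λμ)) − I_{n+k−2(j+1)N}(2t√(λμ))] for 1 ≤ k,n ≤ N−1, where I_ν is the modified Bessel function of the first kind. Then these functions satisfy the forward Kolmogorov equations d/dt p_{k,n}(t) = λ p_{k,n−1}(t) − (λ+μ) p_{k,n}(t) + μ p_{k,n+1}(t) for 2 ≤ n ≤ N−2, and p_{k,n}(0) = δ_{k,n}. -/

import Mathlib

/-- The modified Bessel function of the first kind of integer order
(`besselI (-m) = besselI m`). -/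
noncomputable def besselI (m : ℤ) (x : ℝ) : ℝ :=
  ∑' i : ℕ, (x / 2) ^ (m.natAbs + 2 * i) /
    ((Nat.factorial i : ℝ) * (Nat.factorial (m.natAbs + i) : ℝ))

/-- The transition probability of the truncated birth-death process on `{0,…,N}` with
constant rates `λ, μ` and absorbing endpoints. -/
noncomputable def pconst (lam mu : ℝ) (N : ℕ) (k n : ℤ) (t : ℝ) : ℝ :=
  Real.exp (-(lam + mu) * t) * (lam / mu) ^ (((n : ℝ) - (k : ℝ)) / 2) *
    ∑' j : ℤ, (besselI (n - k - 2 * j * N) (2 * t * Real.sqrt (lam * mu)) -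
               besselI (n + k - 2 * (j + 1) * N) (2 * t * Real.sqrt (lam * mu)))

noncomputable def besselIN (n : ℕ) (x : ℝ) : ℝ :=
  ∑' i : ℕ, (x / 2) ^ (n + 2 * i) /
    ((Nat.factorial i : ℝ) * (Nat.factorial (n + i) : ℝ))

lemma besselI_eq_besselIN (m : ℤ) (x : ℝ) : besselI m x = besselIN m.natAbs x := rfl

/-- the exponential-type constant -/
noncomputable def KK (R : ℝ) : ℝ := ∑' i : ℕ, (R ^ 2 / 4) ^ i / (Nat.factorial i : ℝ)

lemma KK_summand_summable (R : ℝ) : Summable (fun i : ℕ => (R ^ 2 / 4) ^ i / (Nat.factorial i : ℝ)) :=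
  Real.summable_pow_div_factorial _

lemma KK_nonneg (R : ℝ) : 0 ≤ KK R :=
  tsum_nonneg (fun i => by positivity)

lemma bterm_abs_le (n i : ℕ) (x R : ℝ) (hx : |x| ≤ R) :
    |(x / 2) ^ (n + 2 * i) / ((Nat.factorial i : ℝ) * (Nat.factorial (n + i) : ℝ))|
      ≤ (R / 2) ^ n / (Nat.factorial n : ℝ) * ((R ^ 2 / 4) ^ i / (Nat.factorial i : ℝ)) := by
  have hR : 0 ≤ R := le_trans (abs_nonneg x) hx
  have hfi : (0:ℝ) < (Nat.factorial i : ℝ) := by positivity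
  have hfn : (0:ℝ) < (Nat.factorial n : ℝ) := by positivity
  have h1 : |x / 2| ≤ R / 2 := by
    rw [abs_div, abs_two]
    gcongr
  have h2 : (Nat.factorial n : ℝ) * (Nat.factorial i : ℝ) ≤
      (Nat.factorial i : ℝ) * (Nat.factorial (n + i) : ℝ) := by
    rw [mul_comm]
    have : (Nat.factorial n : ℝ) ≤ (Nat.factorial (n + i) : ℝ) := by
      exact_mod_cast Nat.factorial_le (Nat.le_add_right n i)
    exact mul_le_mul_of_nonneg_left this hfi.le
  rw [abs_div, abs_pow, abs_of_pos (by positivity : (0:ℝ) < (Nat.factorial i : ℝ) * (Nat.factorial (n + i) : ℝ))]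
  calc |x / 2| ^ (n + 2 * i) / ((Nat.factorial i : ℝ) * (Nat.factorial (n + i) : ℝ))
      ≤ (R / 2) ^ (n + 2 * i) / ((Nat.factorial n : ℝ) * (Nat.factorial i : ℝ)) := by
        exact div_le_div₀ (by positivity) (pow_le_pow_left₀ (abs_nonneg _) h1 _)
          (by positivity) h2
    _ = (R / 2) ^ n / (Nat.factorial n : ℝ) * ((R ^ 2 / 4) ^ i / (Nat.factorial i : ℝ)) := by
        rw [pow_add]
        have h3 : (R / 2) ^ (2 * i) = (R ^ 2 / 4) ^ i := by
          rw [pow_mul]; ring_nf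
        rw [h3]; ring

lemma bterm_summable (n : ℕ) (x : ℝ) :
    Summable (fun i : ℕ => (x / 2) ^ (n + 2 * i) /
      ((Nat.factorial i : ℝ) * (Nat.factorial (n + i) : ℝ))) := by
  apply Summable.of_abs
  apply Summable.of_nonneg_of_le (fun i => abs_nonneg _)
    (fun i => bterm_abs_le n i x |x| le_rfl)
  exact (KK_summand_summable |x|).mul_left _

lemma besselIN_abs_le (n : ℕ) (x R : ℝ) (hx : |x| ≤ R) :
    |besselIN n x| ≤ (R / 2) ^ n / (Nat.factorial n : ℝ) * KK R := by
  have hsum := bterm_summable n x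
  have h1 : |besselIN n x| ≤ ∑' i : ℕ, |(x / 2) ^ (n + 2 * i) /
      ((Nat.factorial i : ℝ) * (Nat.factorial (n + i) : ℝ))| := by
    rw [besselIN, ← Real.norm_eq_abs]
    refine (norm_tsum_le_tsum_norm ?_).trans_eq ?_
    · simpa only [Real.norm_eq_abs] using hsum.abs
    · simp only [Real.norm_eq_abs]
  refine h1.trans ?_
  calc (∑' i : ℕ, |(x / 2) ^ (n + 2 * i) /
        ((Nat.factorial i : ℝ) * (Nat.factorial (n + i) : ℝ))|)
      ≤ ∑' i : ℕ, (R / 2) ^ n / (Nat.factorial n : ℝ) *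
          ((R ^ 2 / 4) ^ i / (Nat.factorial i : ℝ)) := by
        apply Summable.tsum_le_tsum (fun i => bterm_abs_le n i x R hx) hsum.abs
        exact (KK_summand_summable R).mul_left _
    _ = (R / 2) ^ n / (Nat.factorial n : ℝ) * KK R := tsum_mul_left

lemma besselI_abs_le (m : ℤ) (x R : ℝ) (hx : |x| ≤ R) :
    |besselI m x| ≤ (R / 2) ^ m.natAbs / (Nat.factorial m.natAbs : ℝ) * KK R := by
  rw [besselI_eq_besselIN]; exact besselIN_abs_le _ _ _ hx

lemma summable_coe_mul_pow_div_factorial (y : ℝ) :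
    Summable (fun i : ℕ => (i : ℝ) * y ^ i / (Nat.factorial i : ℝ)) := by
  rw [← summable_nat_add_iff 1]
  have h : (fun i : ℕ => ((i + 1 : ℕ) : ℝ) * y ^ (i + 1) / (Nat.factorial (i + 1) : ℝ))
      = fun i : ℕ => y * (y ^ i / (Nat.factorial i : ℝ)) := by
    funext i
    rw [Nat.factorial_succ]
    have hfi : ((Nat.factorial i : ℝ)) ≠ 0 := by positivity
    push_cast
    field_simp
    ring
  exact h ▸ (Real.summable_pow_div_factorial y).mul_left y

lemma summable_deriv_bound (n : ℕ) (y : ℝ) :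
    Summable (fun i : ℕ => ((n : ℝ) + 2 * i) * y ^ i / (Nat.factorial i : ℝ)) := by
  have h : (fun i : ℕ => ((n : ℝ) + 2 * i) * y ^ i / (Nat.factorial i : ℝ))
      = fun i : ℕ => (n : ℝ) * (y ^ i / (Nat.factorial i : ℝ)) +
          2 * ((i : ℝ) * y ^ i / (Nat.factorial i : ℝ)) := by
    funext i; ring
  rw [h]
  exact ((Real.summable_pow_div_factorial y).mul_left _).add
    ((summable_coe_mul_pow_div_factorial y).mul_left 2)

lemma hasDerivAt_bterm (n i : ℕ) (y : ℝ) :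
    HasDerivAt (fun z => (z / 2) ^ (n + 2 * i) /
        ((Nat.factorial i : ℝ) * (Nat.factorial (n + i) : ℝ)))
      (((n + 2 * i : ℕ) : ℝ) * (y / 2) ^ (n + 2 * i - 1) * (1 / 2) /
        ((Nat.factorial i : ℝ) * (Nat.factorial (n + i) : ℝ))) y := by
  have h : HasDerivAt (fun z : ℝ => z / 2) (1 / 2) y := (hasDerivAt_id y).div_const 2
  exact (h.pow (n + 2 * i)).div_const _

lemma besselIN_hasDerivAt_raw (n : ℕ) (x : ℝ) :
    HasDerivAt (fun y => besselIN n y)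
      (∑' i : ℕ, ((n + 2 * i : ℕ) : ℝ) * (x / 2) ^ (n + 2 * i - 1) * (1 / 2) /
        ((Nat.factorial i : ℝ) * (Nat.factorial (n + i) : ℝ))) x := by
  set R : ℝ := |x| + 1 with hRdef
  have hR1 : 1 ≤ R := le_add_of_nonneg_left (abs_nonneg x)
  have hR0 : 0 < R := lt_of_lt_of_le one_pos hR1
  have hxR : x ∈ Metric.ball (0 : ℝ) R := by
    simp only [Metric.mem_ball, Real.dist_eq, sub_zero]
    linarith [le_refl (|x|)]
  exact hasDerivAt_tsum_of_isPreconnected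
    (u := fun i : ℕ => ((n : ℝ) + 2 * i) * (R ^ 2) ^ i / (Nat.factorial i : ℝ) * R ^ n)
    ((summable_deriv_bound n (R ^ 2)).mul_right _)
    Metric.isOpen_ball ((convex_ball (0:ℝ) R).isPreconnected)
    (fun i y _ => hasDerivAt_bterm n i y)
    (fun i y hy => by
      simp only [Metric.mem_ball, Real.dist_eq, sub_zero] at hy
      have hyR : |y| ≤ R := le_of_lt hy
      have hfi : (0:ℝ) < (Nat.factorial i : ℝ) := by positivity
      have hfni : (1:ℝ) ≤ (Nat.factorial (n + i) : ℝ) := by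
        exact_mod_cast Nat.one_le_iff_ne_zero.mpr (Nat.factorial_ne_zero _)
      have h1 : |y / 2| ≤ R := by
        rw [abs_div, abs_two]
        nlinarith [abs_nonneg y]
      have h2 : |y / 2| ^ (n + 2 * i - 1) ≤ R ^ (n + 2 * i) := by
        calc |y / 2| ^ (n + 2 * i - 1) ≤ R ^ (n + 2 * i - 1) :=
              pow_le_pow_left₀ (abs_nonneg _) h1 _
          _ ≤ R ^ (n + 2 * i) := pow_le_pow_right₀ hR1 (Nat.sub_le _ _)
      rw [Real.norm_eq_abs, abs_div, abs_mul, abs_mul, abs_pow,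
        abs_of_nonneg (show (0:ℝ) ≤ ((n + 2 * i : ℕ) : ℝ) by positivity),
        abs_of_pos (show (0:ℝ) < (Nat.factorial i : ℝ) * (Nat.factorial (n + i) : ℝ) by positivity)]
      calc ((n + 2 * i : ℕ) : ℝ) * |y / 2| ^ (n + 2 * i - 1) * |(1:ℝ) / 2| /
            ((Nat.factorial i : ℝ) * (Nat.factorial (n + i) : ℝ))
          ≤ ((n + 2 * i : ℕ) : ℝ) * R ^ (n + 2 * i) * 1 /
            ((Nat.factorial i : ℝ) * 1) := by
            gcongr
            · rw [abs_of_pos]; norm_num; norm_num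
        _ = ((n : ℝ) + 2 * i) * (R ^ 2) ^ i / (Nat.factorial i : ℝ) * R ^ n := by
            rw [pow_add, pow_mul]
            push_cast
            ring)
    hxR (bterm_summable n x) hxR

lemma besselIN_deriv_zero (x : ℝ) :
    (∑' i : ℕ, ((0 + 2 * i : ℕ) : ℝ) * (x / 2) ^ (0 + 2 * i - 1) * (1 / 2) /
      ((Nat.factorial i : ℝ) * (Nat.factorial (0 + i) : ℝ))) = besselIN 1 x := by
  set h : ℕ → ℝ := fun i => ((0 + 2 * i : ℕ) : ℝ) * (x / 2) ^ (0 + 2 * i - 1) * (1 / 2) /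
      ((Nat.factorial i : ℝ) * (Nat.factorial (0 + i) : ℝ)) with hh
  have hshift : ∀ i : ℕ, h (i + 1) = (x / 2) ^ (1 + 2 * i) /
      ((Nat.factorial i : ℝ) * (Nat.factorial (1 + i) : ℝ)) := by
    intro i
    have he : 0 + 2 * (i + 1) - 1 = 1 + 2 * i := by omega
    have he2 : 0 + 2 * (i + 1) = 2 * i + 2 := by omega
    have he3 : 0 + (i + 1) = i + 1 := by omega
    simp only [hh, he, he2, he3]
    rw [show (1:ℕ) + 2 * i = 2 * i + 1 by omega, show (1:ℕ) + i = i + 1 by omega,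
      Nat.factorial_succ]
    have hfi : ((Nat.factorial i : ℝ)) ≠ 0 := by positivity
    push_cast
    field_simp
  have hsum1 : Summable (fun i : ℕ => h (i + 1)) := by
    rw [funext hshift]
    exact bterm_summable 1 x
  have hsum : Summable h := (summable_nat_add_iff 1).mp hsum1
  rw [Summable.tsum_eq_zero_add hsum]
  have h0 : h 0 = 0 := by simp [hh]
  rw [h0, zero_add, funext hshift]
  rfl

lemma besselIN_deriv_succ (p : ℕ) (x : ℝ) :
    (∑' i : ℕ, ((p + 1 + 2 * i : ℕ) : ℝ) * (x / 2) ^ (p + 1 + 2 * i - 1) * (1 / 2) /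
      ((Nat.factorial i : ℝ) * (Nat.factorial (p + 1 + i) : ℝ)))
      = (besselIN p x + besselIN (p + 2) x) / 2 := by
  set g1 : ℕ → ℝ := fun i => (1 / 2) * ((x / 2) ^ (p + 2 * i) /
      ((Nat.factorial i : ℝ) * (Nat.factorial (p + i) : ℝ))) with hg1
  set g2 : ℕ → ℝ := fun i => (1 / 2) * ((i : ℝ) * (x / 2) ^ (p + 2 * i) /
      ((Nat.factorial i : ℝ) * (Nat.factorial (p + 1 + i) : ℝ))) with hg2
  have hsplit : ∀ i : ℕ, ((p + 1 + 2 * i : ℕ) : ℝ) * (x / 2) ^ (p + 1 + 2 * i - 1) * (1 / 2) /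
      ((Nat.factorial i : ℝ) * (Nat.factorial (p + 1 + i) : ℝ)) = g1 i + g2 i := by
    intro i
    have he : p + 1 + 2 * i - 1 = p + 2 * i := by omega
    have he2 : p + 1 + i = (p + i) + 1 := by omega
    rw [he, hg1, hg2]
    simp only [he2, Nat.factorial_succ]
    have hfi : ((Nat.factorial i : ℝ)) ≠ 0 := by positivity
    have hfpi : ((Nat.factorial (p + i) : ℝ)) ≠ 0 := by positivity
    have hppi : ((p : ℝ) + i + 1) ≠ 0 := by positivity
    push_cast
    field_simp
    ring
  -- the shifted second series
  have hshift : ∀ i : ℕ, (fun j : ℕ => (j : ℝ) * (x / 2) ^ (p + 2 * j) /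
      ((Nat.factorial j : ℝ) * (Nat.factorial (p + 1 + j) : ℝ))) (i + 1)
      = (x / 2) ^ (p + 2 + 2 * i) /
        ((Nat.factorial i : ℝ) * (Nat.factorial (p + 2 + i) : ℝ)) := by
    intro i
    simp only
    have he : p + 2 * (i + 1) = p + 2 + 2 * i := by omega
    have he2 : p + 1 + (i + 1) = p + 2 + i := by omega
    rw [he, he2, Nat.factorial_succ]
    have hfi : ((Nat.factorial i : ℝ)) ≠ 0 := by positivity
    have hfpi : ((Nat.factorial (p + 2 + i) : ℝ)) ≠ 0 := by positivity
    push_cast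
    field_simp
  have hsumh1 : Summable (fun i : ℕ => (fun j : ℕ => (j : ℝ) * (x / 2) ^ (p + 2 * j) /
      ((Nat.factorial j : ℝ) * (Nat.factorial (p + 1 + j) : ℝ))) (i + 1)) := by
    rw [funext hshift]
    exact bterm_summable (p + 2) x
  have hsumh : Summable (fun j : ℕ => (j : ℝ) * (x / 2) ^ (p + 2 * j) /
      ((Nat.factorial j : ℝ) * (Nat.factorial (p + 1 + j) : ℝ))) :=
    (summable_nat_add_iff 1).mp hsumh1
  have hsumg1 : Summable g1 := (bterm_summable p x).mul_left _
  have hsumg2 : Summable g2 := hsumh.mul_left _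
  calc (∑' i : ℕ, ((p + 1 + 2 * i : ℕ) : ℝ) * (x / 2) ^ (p + 1 + 2 * i - 1) * (1 / 2) /
      ((Nat.factorial i : ℝ) * (Nat.factorial (p + 1 + i) : ℝ)))
      = ∑' i : ℕ, (g1 i + g2 i) := by rw [funext hsplit]
    _ = (∑' i, g1 i) + ∑' i, g2 i := Summable.tsum_add hsumg1 hsumg2
    _ = (besselIN p x + besselIN (p + 2) x) / 2 := by
        rw [hg1, hg2]
        rw [tsum_mul_left, tsum_mul_left]
        rw [Summable.tsum_eq_zero_add hsumh]
        simp only [Nat.cast_zero, zero_mul, zero_div, zero_add]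
        rw [funext hshift]
        have : (∑' i : ℕ, (x / 2) ^ (p + 2 + 2 * i) /
            ((Nat.factorial i : ℝ) * (Nat.factorial (p + 2 + i) : ℝ))) = besselIN (p + 2) x := rfl
        rw [this]
        have h2 : (∑' i : ℕ, (x / 2) ^ (p + 2 * i) /
            ((Nat.factorial i : ℝ) * (Nat.factorial (p + i) : ℝ))) = besselIN p x := rfl
        rw [h2]
        ring

lemma besselIN_hasDerivAt_zero (x : ℝ) :
    HasDerivAt (fun y => besselIN 0 y) (besselIN 1 x) x := by
  have h := besselIN_hasDerivAt_raw 0 x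
  rwa [besselIN_deriv_zero] at h

lemma besselIN_hasDerivAt_succ (p : ℕ) (x : ℝ) :
    HasDerivAt (fun y => besselIN (p + 1) y) ((besselIN p x + besselIN (p + 2) x) / 2) x := by
  have h := besselIN_hasDerivAt_raw (p + 1) x
  rwa [besselIN_deriv_succ] at h

lemma besselI_hasDerivAt (m : ℤ) (x : ℝ) :
    HasDerivAt (fun y => besselI m y) ((besselI (m - 1) x + besselI (m + 1) x) / 2) x := by
  simp only [besselI_eq_besselIN]
  rcases lt_trichotomy m 0 with hm | hm | hm
  · obtain ⟨p, rfl⟩ : ∃ p : ℕ, m = -((p : ℤ) + 1) := ⟨(-m - 1).toNat, by omega⟩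
    have h1 : (-((p : ℤ) + 1)).natAbs = p + 1 := by omega
    have h2 : (-((p : ℤ) + 1) - 1).natAbs = p + 2 := by omega
    have h3 : (-((p : ℤ) + 1) + 1).natAbs = p := by omega
    rw [h1, h2, h3, add_comm (besselIN (p + 2) x)]
    exact besselIN_hasDerivAt_succ p x
  · subst hm
    have h2 : ((0 : ℤ) - 1).natAbs = 1 := by omega
    have h3 : ((0 : ℤ) + 1).natAbs = 1 := by omega
    simp only [Int.natAbs_zero, h2, h3]
    have := besselIN_hasDerivAt_zero x
    convert this using 1
    ring
  · obtain ⟨p, rfl⟩ : ∃ p : ℕ, m = (p : ℤ) + 1 := ⟨(m - 1).toNat, by omega⟩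
    have h1 : ((p : ℤ) + 1).natAbs = p + 1 := by omega
    have h2 : ((p : ℤ) + 1 - 1).natAbs = p := by omega
    have h3 : ((p : ℤ) + 1 + 1).natAbs = p + 2 := by omega
    rw [h1, h2, h3]
    exact besselIN_hasDerivAt_succ p x

lemma summable_F (c : ℝ) : Summable (fun m : ℤ => c ^ m.natAbs / (Nat.factorial m.natAbs : ℝ)) := by
  apply Summable.of_nat_of_neg
  · simpa using Real.summable_pow_div_factorial c
  · simpa using Real.summable_pow_div_factorial c

lemma besselI_zero (m : ℤ) : besselI m 0 = if m = 0 then 1 else 0 := by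
  rw [besselI]
  by_cases hm : m = 0
  · subst hm
    simp only [Int.natAbs_zero, if_pos rfl]
    have h : ∀ i : ℕ, ((0:ℝ) / 2) ^ (0 + 2 * i) /
        ((Nat.factorial i : ℝ) * (Nat.factorial (0 + i) : ℝ))
        = if i = 0 then 1 else 0 := by
      intro i
      rcases Nat.eq_zero_or_pos i with hi | hi
      · subst hi; norm_num
      · rw [if_neg (by omega)]
        rw [zero_div, zero_pow (by omega), zero_div]
    rw [funext h]
    exact tsum_ite_eq 0 1
  · rw [if_neg hm]
    have h : ∀ i : ℕ, ((0:ℝ) / 2) ^ (m.natAbs + 2 * i) /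
        ((Nat.factorial i : ℝ) * (Nat.factorial (m.natAbs + i) : ℝ)) = 0 := by
      intro i
      have : m.natAbs ≠ 0 := fun h => hm (Int.natAbs_eq_zero.mp h)
      rw [zero_div, zero_pow (by omega), zero_div]
    rw [funext h]
    exact tsum_zero

section ZS

lemma summable_besselI_comp (x R : ℝ) (hx : |x| ≤ R) {e : ℤ → ℤ}
    (he : Function.Injective e) : Summable (fun j : ℤ => besselI (e j) x) := by
  apply Summable.of_norm_bounded
    (g := fun j : ℤ => (R / 2) ^ (e j).natAbs / (Nat.factorial (e j).natAbs : ℝ) * KK R)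
    (((summable_F (R / 2)).comp_injective he).mul_right (KK R))
  intro j
  rw [Real.norm_eq_abs]
  exact besselI_abs_le _ _ _ hx

lemma inj_sub_one {e : ℤ → ℤ} (he : Function.Injective e) :
    Function.Injective (fun j => e j - 1) := fun a b h => he (by dsimp only at h; omega)

lemma inj_add_one {e : ℤ → ℤ} (he : Function.Injective e) :
    Function.Injective (fun j => e j + 1) := fun a b h => he (by dsimp only at h; omega)

/-- derivative of a single scaled Bessel function -/
lemma hasDerivAt_besselI_scaled (m : ℤ) (s t : ℝ) :
    HasDerivAt (fun u => besselI m (2 * u * s))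
      (s * (besselI (m - 1) (2 * t * s) + besselI (m + 1) (2 * t * s))) t := by
  have hin : HasDerivAt (fun u : ℝ => 2 * u * s) (2 * s) t := by
    simpa using ((hasDerivAt_id t).const_mul 2).mul_const s
  have h := (besselI_hasDerivAt m (2 * t * s)).comp t hin
  convert h using 1
  · rfl
  · rfl
  · rfl
  ring

lemma hasDerivAt_tsum_besselI (s : ℝ) (hs : 0 ≤ s) (e1 e2 : ℤ → ℤ)
    (h1 : Function.Injective e1) (h2 : Function.Injective e2) (t : ℝ) :
    HasDerivAt
      (fun u => ∑' j : ℤ, (besselI (e1 j) (2 * u * s) - besselI (e2 j) (2 * u * s)))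
      (∑' j : ℤ,
        (s * (besselI (e1 j - 1) (2 * t * s) + besselI (e1 j + 1) (2 * t * s)) -
         s * (besselI (e2 j - 1) (2 * t * s) + besselI (e2 j + 1) (2 * t * s)))) t := by
  set R : ℝ := |t| + 1 with hRdef
  have hR0 : 0 < R := by positivity
  have hxR : t ∈ Metric.ball (0 : ℝ) R := by
    simp only [Metric.mem_ball, Real.dist_eq, sub_zero]
    linarith [abs_nonneg t]
  set R' : ℝ := 2 * R * s with hR'def
  have hR'0 : 0 ≤ R' := by positivity
  set F : ℤ → ℝ := fun m => (R' / 2) ^ m.natAbs / (Nat.factorial m.natAbs : ℝ) * KK R' with hF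
  have hFsum : ∀ {e : ℤ → ℤ}, Function.Injective e → Summable (fun j => F (e j)) :=
    fun {e} he => ((summable_F (R' / 2)).comp_injective he).mul_right (KK R')
  apply hasDerivAt_tsum_of_isPreconnected
    (u := fun j : ℤ => s * (F (e1 j - 1) + F (e1 j + 1) + F (e2 j - 1) + F (e2 j + 1)))
    (y₀ := t)
    (by
      have := ((((hFsum (inj_sub_one h1)).add (hFsum (inj_add_one h1))).add
        (hFsum (inj_sub_one h2))).add (hFsum (inj_add_one h2))).mul_left s
      exact this)
    Metric.isOpen_ball ((convex_ball (0:ℝ) R).isPreconnected)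
    (fun j y _ => (hasDerivAt_besselI_scaled (e1 j) s y).sub
      (hasDerivAt_besselI_scaled (e2 j) s y))
    (fun j y hy => by
      simp only [Metric.mem_ball, Real.dist_eq, sub_zero] at hy
      have hyx : |2 * y * s| ≤ R' := by
        rw [hR'def, abs_mul, abs_mul, abs_two]
        have : |y| ≤ R := le_of_lt hy
        have hsabs : |s| = s := abs_of_nonneg hs
        rw [hsabs]
        have h0y : 0 ≤ |y| := abs_nonneg y
        nlinarith
      have hb : ∀ m : ℤ, |besselI m (2 * y * s)| ≤ F m := fun m => besselI_abs_le _ _ _ hyx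
      rw [Real.norm_eq_abs]
      calc |s * (besselI (e1 j - 1) (2 * y * s) + besselI (e1 j + 1) (2 * y * s)) -
            s * (besselI (e2 j - 1) (2 * y * s) + besselI (e2 j + 1) (2 * y * s))|
          ≤ |s * (besselI (e1 j - 1) (2 * y * s) + besselI (e1 j + 1) (2 * y * s))| +
            |s * (besselI (e2 j - 1) (2 * y * s) + besselI (e2 j + 1) (2 * y * s))| :=
            abs_sub _ _
        _ ≤ s * (F (e1 j - 1) + F (e1 j + 1) + F (e2 j - 1) + F (e2 j + 1)) := by
            rw [abs_mul, abs_mul, abs_of_nonneg hs]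
            have b1 := (abs_add_le _ _).trans (add_le_add (hb (e1 j - 1)) (hb (e1 j + 1)))
            have b2 := (abs_add_le _ _).trans (add_le_add (hb (e2 j - 1)) (hb (e2 j + 1)))
            nlinarith [abs_nonneg (besselI (e1 j - 1) (2 * y * s) + besselI (e1 j + 1) (2 * y * s)),
              abs_nonneg (besselI (e2 j - 1) (2 * y * s) + besselI (e2 j + 1) (2 * y * s))])
    hxR
    ((summable_besselI_comp (2 * t * s) (|2 * t * s|) le_rfl h1).sub
      (summable_besselI_comp (2 * t * s) (|2 * t * s|) le_rfl h2))
    hxR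

lemma tsum_deriv_split (s x : ℝ) (e1 e2 : ℤ → ℤ)
    (h1 : Function.Injective e1) (h2 : Function.Injective e2) :
    (∑' j : ℤ,
      (s * (besselI (e1 j - 1) x + besselI (e1 j + 1) x) -
       s * (besselI (e2 j - 1) x + besselI (e2 j + 1) x)))
    = s * ((∑' j : ℤ, (besselI (e1 j - 1) x - besselI (e2 j - 1) x)) +
           (∑' j : ℤ, (besselI (e1 j + 1) x - besselI (e2 j + 1) x))) := by
  have hA := summable_besselI_comp x |x| le_rfl (inj_sub_one h1)
  have hB := summable_besselI_comp x |x| le_rfl (inj_add_one h1)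
  have hC := summable_besselI_comp x |x| le_rfl (inj_sub_one h2)
  have hD := summable_besselI_comp x |x| le_rfl (inj_add_one h2)
  calc (∑' j : ℤ,
      (s * (besselI (e1 j - 1) x + besselI (e1 j + 1) x) -
       s * (besselI (e2 j - 1) x + besselI (e2 j + 1) x)))
      = ∑' j : ℤ, s * ((besselI (e1 j - 1) x - besselI (e2 j - 1) x) +
          (besselI (e1 j + 1) x - besselI (e2 j + 1) x)) := tsum_congr fun j => by ring
    _ = s * ∑' j : ℤ, ((besselI (e1 j - 1) x - besselI (e2 j - 1) x) +
          (besselI (e1 j + 1) x - besselI (e2 j + 1) x)) := tsum_mul_left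
    _ = s * ((∑' j : ℤ, (besselI (e1 j - 1) x - besselI (e2 j - 1) x)) +
           (∑' j : ℤ, (besselI (e1 j + 1) x - besselI (e2 j + 1) x))) := by
        rw [Summable.tsum_add (hA.sub hC) (hB.sub hD)]

end ZS

lemma lam_rpow_shift (lam mu : ℝ) (hlam : 0 < lam) (hmu : 0 < mu) (r : ℝ) :
    lam * (lam / mu) ^ (r - 1 / 2) = Real.sqrt (lam * mu) * (lam / mu) ^ r := by
  have hq : (0:ℝ) < lam / mu := div_pos hlam hmu
  have hsl : (0:ℝ) < Real.sqrt lam := Real.sqrt_pos.mpr hlam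
  have hsm : (0:ℝ) < Real.sqrt mu := Real.sqrt_pos.mpr hmu
  have key : lam / Real.sqrt (lam / mu) = Real.sqrt (lam * mu) := by
    rw [Real.sqrt_div hlam.le, Real.sqrt_mul hlam.le]
    rw [div_div_eq_mul_div]
    rw [div_eq_iff hsl.ne']
    nlinarith [Real.mul_self_sqrt hlam.le, hsl, hsm]
  rw [Real.rpow_sub hq, ← Real.sqrt_eq_rpow]
  calc lam * ((lam / mu) ^ r / Real.sqrt (lam / mu))
      = (lam / Real.sqrt (lam / mu)) * (lam / mu) ^ r := by ring
    _ = Real.sqrt (lam * mu) * (lam / mu) ^ r := by rw [key]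

lemma mu_rpow_shift (lam mu : ℝ) (hlam : 0 < lam) (hmu : 0 < mu) (r : ℝ) :
    mu * (lam / mu) ^ (r + 1 / 2) = Real.sqrt (lam * mu) * (lam / mu) ^ r := by
  have hq : (0:ℝ) < lam / mu := div_pos hlam hmu
  have hsl : (0:ℝ) < Real.sqrt lam := Real.sqrt_pos.mpr hlam
  have hsm : (0:ℝ) < Real.sqrt mu := Real.sqrt_pos.mpr hmu
  have key : mu * Real.sqrt (lam / mu) = Real.sqrt (lam * mu) := by
    rw [Real.sqrt_div hlam.le, Real.sqrt_mul hlam.le]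
    rw [mul_div_assoc']  -- mu * (√lam / √mu) = mu * √lam / √mu
    rw [div_eq_iff hsm.ne']
    nlinarith [Real.mul_self_sqrt hmu.le, hsl, hsm]
  rw [Real.rpow_add hq, ← Real.sqrt_eq_rpow]
  calc mu * ((lam / mu) ^ r * Real.sqrt (lam / mu))
      = (mu * Real.sqrt (lam / mu)) * (lam / mu) ^ r := by ring
    _ = Real.sqrt (lam * mu) * (lam / mu) ^ r := by rw [key]

lemma inj_affine (c b : ℤ) (hb : b ≠ 0) : Function.Injective (fun j : ℤ => c + b * j) :=
  fun u v h => by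
    dsimp only at h
    exact mul_left_cancel₀ hb (by omega)

lemma hasDerivAt_tsum_main (s : ℝ) (hs : 0 ≤ s) (N : ℕ) (hN : 1 < N) (k n : ℤ) (t : ℝ) :
    HasDerivAt
      (fun u => ∑' j : ℤ, (besselI (n - k - 2 * j * N) (2 * u * s) -
        besselI (n + k - 2 * (j + 1) * N) (2 * u * s)))
      (s * ((∑' j : ℤ, (besselI (n - k - 2 * j * N - 1) (2 * t * s) -
              besselI (n + k - 2 * (j + 1) * N - 1) (2 * t * s))) +
            (∑' j : ℤ, (besselI (n - k - 2 * j * N + 1) (2 * t * s) -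
              besselI (n + k - 2 * (j + 1) * N + 1) (2 * t * s))))) t := by
  have hNZ : (2:ℤ) ≤ (N : ℤ) := by exact_mod_cast hN
  have hb : (-(2 * (N:ℤ))) ≠ 0 := by omega
  have he1 : Function.Injective (fun j : ℤ => n - k - 2 * j * (N:ℤ)) := by
    have h : (fun j : ℤ => n - k - 2 * j * (N:ℤ)) =
        fun j : ℤ => (n - k) + (-(2 * (N:ℤ))) * j := funext fun j => by ring
    rw [h]; exact inj_affine _ _ hb
  have he2 : Function.Injective (fun j : ℤ => n + k - 2 * (j + 1) * (N:ℤ)) := by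
    have h : (fun j : ℤ => n + k - 2 * (j + 1) * (N:ℤ)) =
        fun j : ℤ => (n + k - 2 * N) + (-(2 * (N:ℤ))) * j := funext fun j => by ring
    rw [h]; exact inj_affine _ _ hb
  have h := hasDerivAt_tsum_besselI s hs _ _ he1 he2 t
  rwa [tsum_deriv_split s (2 * t * s) _ _ he1 he2] at h

theorem pconst_solves_forward_equations
    (lam mu : ℝ) (hlam : 0 < lam) (hmu : 0 < mu) (N : ℕ) (hN : 1 < N) :
    (∀ k n : ℤ, 1 ≤ k → k ≤ (N : ℤ) - 1 → 2 ≤ n → n ≤ (N : ℤ) - 2 → ∀ t : ℝ,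
      HasDerivAt (fun u => pconst lam mu N k n u)
        (lam * pconst lam mu N k (n - 1) t - (lam + mu) * pconst lam mu N k n t +
          mu * pconst lam mu N k (n + 1) t) t) ∧
    (∀ k n : ℤ, 1 ≤ k → k ≤ (N : ℤ) - 1 → 1 ≤ n → n ≤ (N : ℤ) - 1 →
      pconst lam mu N k n 0 = if k = n then 1 else 0) := by
  have hNZ : (2:ℤ) ≤ (N : ℤ) := by exact_mod_cast hN
  constructor
  · intro k n hk1 hk2 hn1 hn2 t
    have hs0 : 0 ≤ Real.sqrt (lam * mu) := Real.sqrt_nonneg _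
    have hS := hasDerivAt_tsum_main (Real.sqrt (lam * mu)) hs0 N hN k n t
    have hE : HasDerivAt (fun u : ℝ => Real.exp (-(lam + mu) * u))
        (-(lam + mu) * Real.exp (-(lam + mu) * t)) t := by
      have h1 : HasDerivAt (fun u : ℝ => -(lam + mu) * u) (-(lam + mu)) t := by
        simpa using (hasDerivAt_id t).const_mul (-(lam + mu))
      simpa [mul_comm] using h1.exp
    have hP := (hE.mul_const ((lam / mu) ^ (((n : ℝ) - (k : ℝ)) / 2))).mul hS
    simp only [pconst]
    convert hP using 1
    · rfl
    · rfl
    · rfl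
    have hidx1 : (∑' j : ℤ, (besselI (n - 1 - k - 2 * j * N) (2 * t * Real.sqrt (lam * mu)) -
        besselI (n - 1 + k - 2 * (j + 1) * N) (2 * t * Real.sqrt (lam * mu))))
        = ∑' j : ℤ, (besselI (n - k - 2 * j * N - 1) (2 * t * Real.sqrt (lam * mu)) -
        besselI (n + k - 2 * (j + 1) * N - 1) (2 * t * Real.sqrt (lam * mu))) :=
      tsum_congr fun j => by
        rw [show n - 1 - k - 2 * j * (N:ℤ) = n - k - 2 * j * N - 1 by ring,
          show n - 1 + k - 2 * (j + 1) * (N:ℤ) = n + k - 2 * (j + 1) * N - 1 by ring]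
    have hidx2 : (∑' j : ℤ, (besselI (n + 1 - k - 2 * j * N) (2 * t * Real.sqrt (lam * mu)) -
        besselI (n + 1 + k - 2 * (j + 1) * N) (2 * t * Real.sqrt (lam * mu))))
        = ∑' j : ℤ, (besselI (n - k - 2 * j * N + 1) (2 * t * Real.sqrt (lam * mu)) -
        besselI (n + k - 2 * (j + 1) * N + 1) (2 * t * Real.sqrt (lam * mu))) :=
      tsum_congr fun j => by
        rw [show n + 1 - k - 2 * j * (N:ℤ) = n - k - 2 * j * N + 1 by ring,
          show n + 1 + k - 2 * (j + 1) * (N:ℤ) = n + k - 2 * (j + 1) * N + 1 by ring]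
    have hexp1 : (((n - 1 : ℤ) : ℝ) - (k : ℝ)) / 2 = ((n : ℝ) - (k : ℝ)) / 2 - 1 / 2 := by
      push_cast; ring
    have hexp2 : (((n + 1 : ℤ) : ℝ) - (k : ℝ)) / 2 = ((n : ℝ) - (k : ℝ)) / 2 + 1 / 2 := by
      push_cast; ring
    rw [hidx1, hidx2, hexp1, hexp2]
    have hL := lam_rpow_shift lam mu hlam hmu (((n : ℝ) - (k : ℝ)) / 2)
    have hM := mu_rpow_shift lam mu hlam hmu (((n : ℝ) - (k : ℝ)) / 2)
    linear_combination
      (Real.exp (-(lam + mu) * t) *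
        (∑' j : ℤ, (besselI (n - k - 2 * j * N - 1) (2 * t * Real.sqrt (lam * mu)) -
          besselI (n + k - 2 * (j + 1) * N - 1) (2 * t * Real.sqrt (lam * mu))))) * hL +
      (Real.exp (-(lam + mu) * t) *
        (∑' j : ℤ, (besselI (n - k - 2 * j * N + 1) (2 * t * Real.sqrt (lam * mu)) -
          besselI (n + k - 2 * (j + 1) * N + 1) (2 * t * Real.sqrt (lam * mu))))) * hM
  · intro k n hk1 hk2 hn1 hn2
    simp only [pconst]
    rw [show 2 * (0:ℝ) * Real.sqrt (lam * mu) = 0 by ring]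
    simp only [besselI_zero]
    have key : ∀ j : ℤ, ((if n - k - 2 * j * (N:ℤ) = 0 then (1:ℝ) else 0) -
        (if n + k - 2 * (j + 1) * (N:ℤ) = 0 then (1:ℝ) else 0))
        = if j = 0 then (if k = n then (1:ℝ) else 0) else 0 := by
      intro j
      have h2 : ¬(n + k - 2 * (j + 1) * (N:ℤ) = 0) := by
        intro h
        rcases le_or_gt 1 (j + 1) with hj | hj
        · have hge : 2 * (N:ℤ) ≤ 2 * (j + 1) * N := by
            nlinarith [mul_nonneg (show (0:ℤ) ≤ j by linarith) (show (0:ℤ) ≤ (N:ℤ) by linarith)]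
          linarith
        · have hle : 2 * (j + 1) * (N:ℤ) ≤ 0 := by
            nlinarith [mul_nonneg (show (0:ℤ) ≤ -(j+1) by linarith) (show (0:ℤ) ≤ (N:ℤ) by linarith)]
          linarith
      rw [if_neg h2, sub_zero]
      rcases eq_or_ne j 0 with rfl | hj
      · rw [if_pos rfl, show n - k - 2 * 0 * (N:ℤ) = n - k by ring]
        by_cases hkn : k = n
        · rw [if_pos (by omega), if_pos hkn]
        · rw [if_neg (by omega), if_neg hkn]
      · rw [if_neg hj, if_neg]
        intro h
        rcases lt_or_gt_of_ne hj with hj' | hj'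
        · have : 2 * j * (N:ℤ) ≤ -(2 * N) := by
            nlinarith [mul_nonneg (show (0:ℤ) ≤ -j - 1 by linarith) (show (0:ℤ) ≤ (N:ℤ) by linarith)]
          linarith
        · have : 2 * (N:ℤ) ≤ 2 * j * N := by
            nlinarith [mul_nonneg (show (0:ℤ) ≤ j - 1 by linarith) (show (0:ℤ) ≤ (N:ℤ) by linarith)]
          linarith
    rw [tsum_congr key, tsum_ite_eq (0:ℤ) _]
    by_cases hkn : k = n
    · subst hkn
      simp [Real.exp_zero, Real.rpow_zero]
    · simp [hkn]
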